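/- Let u and v be unit vectors in ℝⁿ and let α ∈ [0,π) be the angle between them (so cos α = u·v). For 0 ≤ t ≤ 1 set u(t) = (sin((1−t)α)·u + sin(tα)·v)/sin α if α > 0, and u(t) = u if α = 0. For x, y ∈ ℝⁿ define σ(t) = ((1−t)x+ty−u(t), (1−t)x+ty+u(t)). Then for every t ∈ [0,1]: (i) ‖u(t)‖ = 1, so σ(t) lies in the boundary ∂F₀ = {(z−w, z+w) : z ∈ ℝⁿ, ‖w‖ = 1} of F₀(ℝⁿ,2); (ii) ‖σ'(t)‖² = 2(‖x−y‖² + α²); and consequently (iii) the length of the curve σ is √(2(‖x−y‖² + α²)). -/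

import Mathlib

open scoped RealInnerProductSpace ENNReal

/-- The pair `(x, y) ∈ ℝⁿ × ℝⁿ` viewed in `ℝ²ⁿ` with the Euclidean (`L²`) metric. -/
noncomputable def toL2 {n : ℕ} (x y : EuclideanSpace ℝ (Fin n)) :
    WithLp 2 (EuclideanSpace ℝ (Fin n) × EuclideanSpace ℝ (Fin n)) :=
  (WithLp.equiv 2 (EuclideanSpace ℝ (Fin n) × EuclideanSpace ℝ (Fin n))).symm (x, y)

/-- `F₀(ℝⁿ,2) = {(x,xp) : ‖x - xp‖ ≥ 2}` as a subset of `ℝ²ⁿ` with the Euclidean metric. -/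
def F0 (n : ℕ) : Set (WithLp 2 (EuclideanSpace ℝ (Fin n) × EuclideanSpace ℝ (Fin n))) :=
  {p | 2 ≤ ‖(WithLp.equiv 2 (EuclideanSpace ℝ (Fin n) × EuclideanSpace ℝ (Fin n)) p).1 -
        (WithLp.equiv 2 (EuclideanSpace ℝ (Fin n) × EuclideanSpace ℝ (Fin n)) p).2‖}


instance {n : ℕ} : ContinuousSMul ℝ (WithLp 2 (EuclideanSpace ℝ (Fin n) × EuclideanSpace ℝ (Fin n))) :=
  IsBoundedSMul.continuousSMul

lemma trig1 (α p q : ℝ) :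
    Real.sin (α - p) * Real.sin (α - q) + Real.sin p * Real.sin q
      + (Real.sin (α - p) * Real.sin q + Real.sin p * Real.sin (α - q)) * Real.cos α
    = Real.sin α ^ 2 * Real.cos (p - q) := by
  rw [Real.sin_sub, Real.sin_sub, Real.cos_sub]
  linear_combination (-(Real.sin p * Real.sin q)) * Real.sin_sq_add_cos_sq α

lemma trig2 (α p : ℝ) :
    Real.cos (α - p) ^ 2 + Real.cos p ^ 2
      - 2 * Real.cos (α - p) * Real.cos p * Real.cos α = Real.sin α ^ 2 := by
  rw [Real.cos_sub]
  linear_combination Real.sin α ^ 2 * Real.sin_sq_add_cos_sq p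
    - Real.cos p ^ 2 * Real.sin_sq_add_cos_sq α

/-- auxiliary: the derivative of the slerp `u(t)`. -/
noncomputable def wAux {n : ℕ} (u v : EuclideanSpace ℝ (Fin n)) (α t : ℝ) :
    EuclideanSpace ℝ (Fin n) :=
  (Real.sin α)⁻¹ • ((Real.cos ((1 - t) * α) * ((0 - 1) * α)) • u
    + (Real.cos (t * α) * (1 * α)) • v)

/-- Proposition: for unit vectors `u, v` at angle `α ∈ [0,π)` and `x, y ∈ ℝⁿ`, the curve
`σ(t) = ((1-t)x+ty−u(t), (1-t)x+ty+u(t))`, where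
`u(t) = (sin((1-t)α)u + sin(tα)v)/sin α` (and `u(t) = u` when `α = 0`), stays on the
boundary `∂F₀` (in particular `‖u(t)‖ = 1`), has derivative of squared norm
`2(‖x−y‖² + α²)` at each `t ∈ [0,1]`, and has length `√(2(‖x−y‖² + α²))`. -/
theorem stmt2 {n : ℕ} (u v : EuclideanSpace ℝ (Fin n)) (hu : ‖u‖ = 1) (hv : ‖v‖ = 1)
    (α : ℝ) (hα0 : 0 ≤ α) (hαπ : α < Real.pi) (hcos : Real.cos α = ⟪u, v⟫)
    (x y : EuclideanSpace ℝ (Fin n))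
    (ut : ℝ → EuclideanSpace ℝ (Fin n))
    (hut : ∀ t : ℝ, ut t = if α = 0 then u
      else (Real.sin α)⁻¹ • (Real.sin ((1 - t) * α) • u + Real.sin (t * α) • v))
    (σ : ℝ → WithLp 2 (EuclideanSpace ℝ (Fin n) × EuclideanSpace ℝ (Fin n)))
    (hσ : ∀ t : ℝ, σ t = toL2 (((1 - t) • x + t • y) - ut t) (((1 - t) • x + t • y) + ut t)) :
    (∀ t ∈ Set.Icc (0:ℝ) 1, ‖ut t‖ = 1 ∧
      ∃ z w : EuclideanSpace ℝ (Fin n), ‖w‖ = 1 ∧ σ t = toL2 (z - w) (z + w)) ∧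
    (∀ t ∈ Set.Icc (0:ℝ) 1,
      ∃ d : WithLp 2 (EuclideanSpace ℝ (Fin n) × EuclideanSpace ℝ (Fin n)),
        HasDerivAt σ d t ∧ ‖d‖ ^ 2 = 2 * (‖x - y‖ ^ 2 + α ^ 2)) ∧
    eVariationOn σ (Set.Icc 0 1)
      = ENNReal.ofReal (Real.sqrt (2 * (‖x - y‖ ^ 2 + α ^ 2))) := by
  have huu : ⟪u, u⟫ = 1 := by rw [real_inner_self_eq_norm_sq, hu]; norm_num
  have hvv : ⟪v, v⟫ = 1 := by rw [real_inner_self_eq_norm_sq, hv]; norm_num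
  have huv : ⟪u, v⟫ = Real.cos α := hcos.symm
  have hvu : ⟪v, u⟫ = Real.cos α := by rw [real_inner_comm]; exact hcos.symm
  -- the fundamental inner-product formula for the slerp
  have hinner : ∀ s t : ℝ, ⟪ut s, ut t⟫ = Real.cos ((s - t) * α) := by
    intro s t
    rcases eq_or_ne α 0 with h0 | h0
    · simp [hut, h0, huu, hu]
    · have hS : Real.sin α ≠ 0 :=
        (Real.sin_pos_of_pos_of_lt_pi (lt_of_le_of_ne hα0 (Ne.symm h0)) hαπ).ne'
      rw [hut s, hut t, if_neg h0, if_neg h0,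
        show (1 - s) * α = α - s * α from by ring,
        show (1 - t) * α = α - t * α from by ring,
        show (s - t) * α = s * α - t * α from by ring]
      simp only [real_inner_smul_left, real_inner_smul_right, inner_add_left,
        inner_add_right, huu, hvv, huv, hvu]
      have hI : (Real.sin α)⁻¹ * Real.sin α = 1 := inv_mul_cancel₀ hS
      linear_combination (Real.sin α)⁻¹ ^ 2 * trig1 α (s * α) (t * α)
        + Real.cos (s * α - t * α) * ((Real.sin α)⁻¹ * Real.sin α + 1) * hI
  have hnorm : ∀ t : ℝ, ‖ut t‖ = 1 := by
    intro t
    have h2 : ‖ut t‖ ^ 2 = 1 := by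
      rw [← real_inner_self_eq_norm_sq]; simpa using hinner t t
    rw [← Real.sqrt_sq (norm_nonneg (ut t)), h2, Real.sqrt_one]
  -- derivative of the linear part
  have hcder : ∀ t : ℝ, HasDerivAt (fun s : ℝ => (1 - s) • x + s • y) (y - x) t := by
    intro t
    have h1 : HasDerivAt (fun s : ℝ => (1 : ℝ) - s) (0 - 1) t :=
      (hasDerivAt_const t (1 : ℝ)).sub (hasDerivAt_id t)
    have h2 := (h1.smul_const x).add ((hasDerivAt_id t).smul_const y)
    rw [show y - x = ((0 : ℝ) - 1) • x + (1 : ℝ) • y by module]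
    exact h2
  -- derivative of the slerp
  have hutder : ∀ t : ℝ, HasDerivAt ut (wAux u v α t) t := by
    intro t
    rcases eq_or_ne α 0 with h0 | h0
    · have h1 : HasDerivAt ut 0 t :=
        (hasDerivAt_const t u).congr_of_eventuallyEq
          (Filter.Eventually.of_forall fun s => by rw [hut s, if_pos h0])
      have h2 : wAux u v α t = 0 := by simp [wAux, h0]
      rw [h2]; exact h1
    · have hf : HasDerivAt (fun s : ℝ => Real.sin ((1 - s) * α))
          (Real.cos ((1 - t) * α) * ((0 - 1) * α)) t :=
        (Real.hasDerivAt_sin _).comp t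
          (((hasDerivAt_const t (1 : ℝ)).sub (hasDerivAt_id t)).mul_const α)
      have hg : HasDerivAt (fun s : ℝ => Real.sin (s * α))
          (Real.cos (t * α) * (1 * α)) t :=
        (Real.hasDerivAt_sin _).comp t ((hasDerivAt_id t).mul_const α)
      exact (((hf.smul_const u).add (hg.smul_const v)).const_smul
        ((Real.sin α)⁻¹)).congr_of_eventuallyEq
        (Filter.Eventually.of_forall fun s => by rw [hut s, if_neg h0]; rfl)
  -- squared norm of the slerp derivative
  have hw_inner : ∀ t : ℝ, ⟪wAux u v α t, wAux u v α t⟫ = α ^ 2 := by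
    intro t
    rcases eq_or_ne α 0 with h0 | h0
    · simp [wAux, h0]
    · have hS : Real.sin α ≠ 0 :=
        (Real.sin_pos_of_pos_of_lt_pi (lt_of_le_of_ne hα0 (Ne.symm h0)) hαπ).ne'
      simp only [wAux]
      rw [show (1 - t) * α = α - t * α from by ring]
      simp only [real_inner_smul_left, real_inner_smul_right, inner_add_left,
        inner_add_right, huu, hvv, huv, hvu]
      have hI : (Real.sin α)⁻¹ * Real.sin α = 1 := inv_mul_cancel₀ hS
      linear_combination ((Real.sin α)⁻¹ ^ 2 * α ^ 2) * trig2 α (t * α)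
        + α ^ 2 * ((Real.sin α)⁻¹ * Real.sin α + 1) * hI
  -- derivative of σ
  have hσd : ∀ t : ℝ, HasDerivAt σ
      (toL2 ((y - x) - wAux u v α t) ((y - x) + wAux u v α t)) t := by
    intro t
    have hp : HasDerivAt
        (fun s : ℝ => (((1 - s) • x + s • y) - ut s, ((1 - s) • x + s • y) + ut s))
        ((y - x) - wAux u v α t, (y - x) + wAux u v α t) t :=
      ((hcder t).sub (hutder t)).prodMk ((hcder t).add (hutder t))
    have h2 := ((WithLp.prodContinuousLinearEquiv 2 ℝ (EuclideanSpace ℝ (Fin n))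
      (EuclideanSpace ℝ (Fin n))).symm.toContinuousLinearMap).hasFDerivAt.comp_hasDerivAt t hp
    exact h2.congr_of_eventuallyEq (Filter.Eventually.of_forall fun s => hσ s)
  -- squared norm of the derivative of σ
  have hd2 : ∀ t : ℝ, ‖toL2 ((y - x) - wAux u v α t) ((y - x) + wAux u v α t)‖ ^ 2
      = 2 * (‖x - y‖ ^ 2 + α ^ 2) := by
    intro t
    have hW : ‖wAux u v α t‖ ^ 2 = α ^ 2 := by
      rw [← real_inner_self_eq_norm_sq]; exact hw_inner t
    have h1 : ‖toL2 ((y - x) - wAux u v α t) ((y - x) + wAux u v α t)‖ ^ 2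
        = ‖(y - x) - wAux u v α t‖ ^ 2 + ‖(y - x) + wAux u v α t‖ ^ 2 :=
      WithLp.prod_norm_sq_eq_of_L2 _
    rw [h1, norm_sub_sq_real, norm_add_sq_real]
    have h3 : ‖y - x‖ ^ 2 = ‖x - y‖ ^ 2 := by rw [norm_sub_rev]
    linarith [hW, h3]
  -- distance formula along σ
  have hdiff : ∀ s t : ℝ, ‖σ s - σ t‖ ^ 2
      = 2 * (s - t) ^ 2 * ‖x - y‖ ^ 2 + (4 - 4 * Real.cos ((s - t) * α)) := by
    intro s t
    have hA : (((1 - s) • x + s • y) - ut s) - (((1 - t) • x + t • y) - ut t)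
        = ((s - t) • (y - x)) - (ut s - ut t) := by module
    have hB : (((1 - s) • x + s • y) + ut s) - (((1 - t) • x + t • y) + ut t)
        = ((s - t) • (y - x)) + (ut s - ut t) := by module
    have hsubL2 : ∀ a b c d : EuclideanSpace ℝ (Fin n),
        toL2 a b - toL2 c d = toL2 (a - c) (b - d) := fun _ _ _ _ => rfl
    have hsub : σ s - σ t = toL2 (((s - t) • (y - x)) - (ut s - ut t))
        (((s - t) • (y - x)) + (ut s - ut t)) := by
      rw [hσ s, hσ t, hsubL2, hA, hB]
    rw [hsub]
    have h1 : ‖toL2 (((s - t) • (y - x)) - (ut s - ut t))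
        (((s - t) • (y - x)) + (ut s - ut t))‖ ^ 2
        = ‖((s - t) • (y - x)) - (ut s - ut t)‖ ^ 2
          + ‖((s - t) • (y - x)) + (ut s - ut t)‖ ^ 2 :=
      WithLp.prod_norm_sq_eq_of_L2 _
    rw [h1, norm_sub_sq_real, norm_add_sq_real]
    have h2 : ‖(s - t) • (y - x)‖ ^ 2 = (s - t) ^ 2 * ‖x - y‖ ^ 2 := by
      rw [norm_smul, Real.norm_eq_abs, mul_pow, sq_abs, norm_sub_rev]
    have h3 : ‖ut s - ut t‖ ^ 2 = 2 - 2 * Real.cos ((s - t) * α) := by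
      rw [← real_inner_self_eq_norm_sq]
      have hss : ⟪ut s, ut s⟫ = 1 := by simpa using hinner s s
      have htt : ⟪ut t, ut t⟫ = 1 := by simpa using hinner t t
      have hst2 : ⟪ut s, ut t⟫ = Real.cos ((s - t) * α) := hinner s t
      have hts : ⟪ut t, ut s⟫ = Real.cos ((s - t) * α) := by
        rw [hinner t s, show (t - s) * α = -((s - t) * α) from by ring, Real.cos_neg]
      simp only [inner_sub_left, inner_sub_right, hss, htt, hst2, hts]
      ring
    linarith [h2, h3]
  -- lower bound via uniform partitions
  have key : ∀ N : ℕ, 1 ≤ N →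
      ENNReal.ofReal (Real.sqrt (2 * ‖x - y‖ ^ 2
        + 4 * (N : ℝ) ^ 2 * (1 - Real.cos (α / (N : ℝ)))))
      ≤ eVariationOn σ (Set.Icc 0 1) := by
    intro N hN
    have hN0 : (0 : ℝ) < (N : ℝ) := by exact_mod_cast hN
    set uu : ℕ → ℝ := fun i => (i : ℝ) / (N : ℝ) with huu_def
    have hmono : MonotoneOn uu (Set.Icc 0 N) := by
      intro i _ j _ hij
      simp only [huu_def]
      gcongr
    have hmem : ∀ i ∈ Set.Icc 0 N, uu i ∈ Set.Icc (0 : ℝ) 1 := by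
      intro i hi
      simp only [huu_def, Set.mem_Icc]
      constructor
      · positivity
      · rw [div_le_one hN0]; exact_mod_cast hi.2
    have hsum := eVariationOn.sum_le_of_monotoneOn_Icc (f := σ) hmono hmem
    refine le_trans ?_ hsum
    have hstep : ∀ i ∈ Finset.Ico 0 N, edist (σ (uu (i + 1))) (σ (uu i))
        = ENNReal.ofReal (Real.sqrt (2 * (1 / (N : ℝ)) ^ 2 * ‖x - y‖ ^ 2
          + (4 - 4 * Real.cos (α / (N : ℝ))))) := by
      intro i _
      have hd : uu (i + 1) - uu i = 1 / (N : ℝ) := by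
        simp only [huu_def]; push_cast; ring
      rw [edist_dist, dist_eq_norm,
        ← Real.sqrt_sq (norm_nonneg (σ (uu (i + 1)) - σ (uu i))),
        hdiff (uu (i + 1)) (uu i), hd,
        show (1 / (N : ℝ)) * α = α / (N : ℝ) from by ring]
    rw [Finset.sum_congr rfl hstep, Finset.sum_const, Nat.card_Ico, Nat.sub_zero,
      nsmul_eq_mul, ← ENNReal.ofReal_natCast N,
      ← ENNReal.ofReal_mul (by positivity : (0 : ℝ) ≤ (N : ℝ))]
    apply ENNReal.ofReal_le_ofReal
    have hmulsqrt : (N : ℝ) * Real.sqrt (2 * (1 / (N : ℝ)) ^ 2 * ‖x - y‖ ^ 2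
        + (4 - 4 * Real.cos (α / (N : ℝ))))
        = Real.sqrt ((N : ℝ) ^ 2 * (2 * (1 / (N : ℝ)) ^ 2 * ‖x - y‖ ^ 2
          + (4 - 4 * Real.cos (α / (N : ℝ))))) := by
      rw [Real.sqrt_mul (sq_nonneg _), Real.sqrt_sq hN0.le]
    rw [hmulsqrt]
    apply le_of_eq
    congr 1
    field_simp
  -- the limit of the partition sums
  have htend : Filter.Tendsto
      (fun N : ℕ => 2 * ‖x - y‖ ^ 2 + 4 * (N : ℝ) ^ 2 * (1 - Real.cos (α / (N : ℝ))))
      Filter.atTop (nhds (2 * ‖x - y‖ ^ 2 + 2 * α ^ 2)) := by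
    apply Filter.Tendsto.const_add
    rcases eq_or_ne α 0 with h0 | h0
    · simp only [h0, zero_div, Real.cos_zero, sub_self, mul_zero]
      simpa using tendsto_const_nhds
    · have hslope : Filter.Tendsto (fun h : ℝ => Real.sin h / h)
          (nhdsWithin (0 : ℝ) {(0 : ℝ)}ᶜ) (nhds 1) := by
        have h := hasDerivAt_iff_tendsto_slope.mp (Real.hasDerivAt_sin 0)
        simp only [Real.sin_zero, Real.cos_zero] at h
        refine Filter.Tendsto.congr (fun y => ?_) h
        rw [slope_def_field]
        simp
      have hto0 : Filter.Tendsto (fun N : ℕ => α / (2 * (N : ℝ))) Filter.atTop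
          (nhdsWithin (0 : ℝ) {(0 : ℝ)}ᶜ) := by
        apply tendsto_nhdsWithin_of_tendsto_nhds_of_eventually_within
        · have h := tendsto_const_div_atTop_nhds_zero_nat (α / 2)
          refine h.congr fun N => ?_
          rw [div_div]
        · filter_upwards [Filter.eventually_gt_atTop 0] with N hN
          have hN0 : (0 : ℝ) < 2 * (N : ℝ) := by positivity
          exact div_ne_zero h0 hN0.ne'
      have hphi : Filter.Tendsto
          (fun N : ℕ => Real.sin (α / (2 * (N : ℝ))) / (α / (2 * (N : ℝ))))
          Filter.atTop (nhds 1) := hslope.comp hto0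
      have h2 : Filter.Tendsto
          (fun N : ℕ => 2 * (α * (Real.sin (α / (2 * (N : ℝ))) / (α / (2 * (N : ℝ))))) ^ 2)
          Filter.atTop (nhds (2 * (α * 1) ^ 2)) :=
        ((hphi.const_mul α).pow 2).const_mul 2
      have heq : ∀ᶠ N : ℕ in Filter.atTop,
          2 * (α * (Real.sin (α / (2 * (N : ℝ))) / (α / (2 * (N : ℝ))))) ^ 2
          = 4 * (N : ℝ) ^ 2 * (1 - Real.cos (α / (N : ℝ))) := by
        filter_upwards [Filter.eventually_gt_atTop 0] with N hN
        have hN0 : (0 : ℝ) < (N : ℝ) := by exact_mod_cast hN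
        have harg : α / (N : ℝ) = 2 * (α / (2 * (N : ℝ))) := by
          rw [mul_div_assoc', mul_div_mul_left _ _ (two_ne_zero (α := ℝ))]
        have hcos2 : Real.cos (α / (N : ℝ)) = 1 - 2 * Real.sin (α / (2 * (N : ℝ))) ^ 2 := by
          rw [harg, Real.cos_two_mul]
          linarith [Real.sin_sq_add_cos_sq (α / (2 * (N : ℝ)))]
        rw [hcos2]
        field_simp
        ring
      have h3 := Filter.Tendsto.congr' heq h2
      simpa using h3
  have haT : Filter.Tendsto (fun N : ℕ => Real.sqrt (2 * ‖x - y‖ ^ 2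
      + 4 * (N : ℝ) ^ 2 * (1 - Real.cos (α / (N : ℝ))))) Filter.atTop
      (nhds (Real.sqrt (2 * (‖x - y‖ ^ 2 + α ^ 2)))) := by
    have h4 := (Real.continuous_sqrt.tendsto (2 * ‖x - y‖ ^ 2 + 2 * α ^ 2)).comp htend
    have he : 2 * ‖x - y‖ ^ 2 + 2 * α ^ 2 = 2 * (‖x - y‖ ^ 2 + α ^ 2) := by ring
    rw [he] at h4
    exact h4
  have lower : ENNReal.ofReal (Real.sqrt (2 * (‖x - y‖ ^ 2 + α ^ 2)))
      ≤ eVariationOn σ (Set.Icc 0 1) := by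
    have h5 := (ENNReal.continuous_ofReal.tendsto _).comp haT
    refine le_of_tendsto h5 ?_
    filter_upwards [Filter.eventually_ge_atTop 1] with N hN
    exact key N hN
  -- upper bound via the Lipschitz property
  have hLd : ∀ t : ℝ, ‖toL2 ((y - x) - wAux u v α t) ((y - x) + wAux u v α t)‖
      = Real.sqrt (2 * (‖x - y‖ ^ 2 + α ^ 2)) := by
    intro t
    rw [← Real.sqrt_sq (norm_nonneg (toL2 ((y - x) - wAux u v α t)
      ((y - x) + wAux u v α t))), hd2 t]
  have hlip : LipschitzOnWith (Real.sqrt (2 * (‖x - y‖ ^ 2 + α ^ 2))).toNNReal σ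
      (Set.Icc 0 1) := by
    apply (convex_Icc (0 : ℝ) 1).lipschitzOnWith_of_nnnorm_hasDerivWithin_le
      (f' := fun t => toL2 ((y - x) - wAux u v α t) ((y - x) + wAux u v α t))
      (fun t _ => (hσd t).hasDerivWithinAt)
    intro t _
    exact le_of_eq (by rw [← norm_toNNReal, hLd t])
  have upper : eVariationOn σ (Set.Icc 0 1)
      ≤ ENNReal.ofReal (Real.sqrt (2 * (‖x - y‖ ^ 2 + α ^ 2))) := by
    have h1 := hlip.comp_eVariationOn_le (Set.mapsTo_id (Set.Icc (0 : ℝ) 1))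
    have h2 : eVariationOn (id : ℝ → ℝ) (Set.Icc 0 1) ≤ ENNReal.ofReal 1 := by
      have h3 := (monotone_id.monotoneOn (Set.Icc (0 : ℝ) 1)).eVariationOn_le
        (Set.left_mem_Icc.2 zero_le_one) (Set.right_mem_Icc.2 zero_le_one)
      simpa using h3
    calc eVariationOn σ (Set.Icc 0 1) = eVariationOn (σ ∘ id) (Set.Icc 0 1) := rfl
      _ ≤ (Real.sqrt (2 * (‖x - y‖ ^ 2 + α ^ 2))).toNNReal
            * eVariationOn (id : ℝ → ℝ) (Set.Icc 0 1) := h1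
      _ ≤ (Real.sqrt (2 * (‖x - y‖ ^ 2 + α ^ 2))).toNNReal * ENNReal.ofReal 1 :=
            mul_le_mul_right h2 _
      _ = ENNReal.ofReal (Real.sqrt (2 * (‖x - y‖ ^ 2 + α ^ 2))) := by
            rw [ENNReal.ofReal_one, mul_one]; rfl
  exact ⟨fun t _ => ⟨hnorm t, (1 - t) • x + t • y, ut t, hnorm t, hσ t⟩,
    fun t _ => ⟨_, hσd t, hd2 t⟩, le_antisymm upper lower⟩
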